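/- Let (ξₖ, ηₖ) be i.i.d. copies of (ξ, η) with a := E ξ > 0, E log(1 + η) < ∞, and η ≥ 0 (with η > 0 with positive probability so that Dₙ > 0 eventually). Then (log Dₙ)/n converges to a almost surely as n → ∞, where Dₙ = Σ_{k=1}^n ηₖ e^{S_k} and Sₙ = ξ₁ + … + ξₙ. -/

import Mathlib

open MeasureTheory ProbabilityTheory Filter

/-- Cesàro: if averages converge, individual terms over `n+1` tend to `0`. -/
lemma aux_cesaro {x : ℕ → ℝ} {c : ℝ}
    (h : Tendsto (fun n => (∑ k ∈ Finset.range n, x k) / n) atTop (nhds c)) :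
    Tendsto (fun n : ℕ => x n / (n + 1)) atTop (nhds 0) := by
  have h1 : Tendsto (fun n : ℕ => (∑ k ∈ Finset.range (n + 1), x k) / ((n : ℝ) + 1))
      atTop (nhds c) := by
    have := h.comp (tendsto_add_atTop_nat 1)
    refine this.congr fun n => ?_
    simp [Function.comp]
  have h2 : Tendsto (fun n : ℕ => (∑ k ∈ Finset.range n, x k) / ((n : ℝ) + 1))
      atTop (nhds c) := by
    have hd : Tendsto (fun n : ℕ => ((n : ℝ) / ((n : ℝ) + 1))) atTop (nhds 1) :=
      tendsto_natCast_div_add_atTop (1 : ℝ)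
    have hm := h.mul hd
    rw [mul_one] at hm
    refine hm.congr fun n => ?_
    rcases Nat.eq_zero_or_pos n with h0 | h0
    · simp [h0]
    · have hn : (n : ℝ) ≠ 0 := Nat.cast_ne_zero.2 h0.ne'
      field_simp
  have h3 := h1.sub h2
  rw [sub_self] at h3
  refine h3.congr fun n => ?_
  rw [div_sub_div_same, Finset.sum_range_succ]
  ring_nf

/-- If partial sums strictly increase over `[m, n)`, some term there is nonzero. -/
lemma aux_window {y : ℕ → ℝ} {m n : ℕ} (hmn : m ≤ n)
    (h : ∑ k ∈ Finset.range m, y k < ∑ k ∈ Finset.range n, y k) :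
    ∃ k, m ≤ k ∧ k < n ∧ y k ≠ 0 := by
  by_contra hc
  push_neg at hc
  have hz : ∑ k ∈ Finset.Ico m n, y k = 0 := by
    refine Finset.sum_eq_zero fun k hk => ?_
    rcases Finset.mem_Ico.1 hk with ⟨h1, h2⟩
    exact hc k h1 h2
  have := Finset.sum_range_add_sum_Ico y hmn
  rw [hz, add_zero] at this
  linarith

theorem log_perpetuity_lln
    {Ω : Type*} [MeasurableSpace Ω] (μ : Measure Ω) [IsProbabilityMeasure μ]
    (ξ η : ℕ → Ω → ℝ) (a : ℝ) (ha : 0 < a)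
    (hmeas : ∀ k, Measurable (fun ω => (ξ k ω, η k ω)))
    (hindep : iIndepFun (fun k ω => (ξ k ω, η k ω)) μ)
    (hident : ∀ k, IdentDistrib (fun ω => (ξ k ω, η k ω)) (fun ω => (ξ 0 ω, η 0 ω)) μ μ)
    (hint : Integrable (ξ 0) μ)
    (hmean : μ[ξ 0] = a)
    (hnonneg : ∀ᵐ ω ∂μ, 0 ≤ η 0 ω)
    (hposprob : 0 < μ {ω | 0 < η 0 ω})
    (hlog : Integrable (fun ω => Real.log (1 + η 0 ω)) μ) :
    ∀ᵐ ω ∂μ,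
      Tendsto (fun n => Real.log (∑ k ∈ Finset.range n,
          η k ω * Real.exp (∑ i ∈ Finset.range (k + 1), ξ i ω)) / n)
        atTop (nhds a) := by
  -- Strong law for ξ.
  have hSlln : ∀ᵐ ω ∂μ,
      Tendsto (fun n : ℕ => (∑ i ∈ Finset.range n, ξ i ω) / n) atTop (nhds a) := by
    have hi : Pairwise (Function.onFun (IndepFun · · μ) ξ) := by
      intro i j hij
      exact (hindep.comp (fun _ => Prod.fst) (fun _ => measurable_fst)).indepFun hij
    have hid : ∀ i, IdentDistrib (ξ i) (ξ 0) μ μ := fun i =>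
      (hident i).comp measurable_fst
    have := strong_law_ae_real ξ hint hi hid
    rw [hmean] at this
    exact this
  -- Strong law for log (1 + η).
  have hLlln : ∀ᵐ ω ∂μ,
      Tendsto (fun n : ℕ => (∑ k ∈ Finset.range n, Real.log (1 + η k ω)) / n) atTop
        (nhds (μ[fun ω => Real.log (1 + η 0 ω)])) := by
    have hg : Measurable fun p : ℝ × ℝ => Real.log (1 + p.2) :=
      Real.measurable_log.comp (measurable_const.add measurable_snd)
    have hi : Pairwise (Function.onFun (IndepFun · · μ) fun k ω => Real.log (1 + η k ω)) := by
      intro i j hij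
      exact (hindep.comp (fun _ => fun p : ℝ × ℝ => Real.log (1 + p.2))
        (fun _ => hg)).indepFun hij
    have hid : ∀ i, IdentDistrib (fun ω => Real.log (1 + η i ω))
        (fun ω => Real.log (1 + η 0 ω)) μ μ := fun i => (hident i).comp hg
    exact strong_law_ae_real _ hlog hi hid
  -- choose δ with positive probability that η 0 > δ
  obtain ⟨δ, hδpos, hδprob⟩ : ∃ δ : ℝ, 0 < δ ∧ 0 < μ {ω | δ < η 0 ω} := by
    by_contra hcon
    push_neg at hcon
    have hnull : ∀ m : ℕ, μ {ω | 1 / ((m : ℝ) + 1) < η 0 ω} = 0 := fun m =>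
      le_antisymm (hcon (1 / ((m : ℝ) + 1)) (by positivity)) zero_le
    have hsub : {ω | 0 < η 0 ω} ⊆ ⋃ m : ℕ, {ω | 1 / ((m : ℝ) + 1) < η 0 ω} := by
      intro ω hω
      have hω' : (0:ℝ) < η 0 ω := hω
      obtain ⟨m, hm⟩ := exists_nat_one_div_lt hω'
      exact Set.mem_iUnion.2 ⟨m, hm⟩
    have : μ {ω | 0 < η 0 ω} = 0 :=
      le_antisymm (le_trans (measure_mono hsub) (le_of_eq (measure_iUnion_null hnull)))
        zero_le
    exact absurd this hposprob.ne'
  -- indicator random variables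
  set ind : ℕ → Ω → ℝ := fun k ω => if δ < η k ω then (1 : ℝ) else 0 with hind_def
  have hgmeas : Measurable fun p : ℝ × ℝ => if δ < p.2 then (1 : ℝ) else 0 :=
    Measurable.ite (measurableSet_lt measurable_const measurable_snd)
      measurable_const measurable_const
  have hindmeas : ∀ k, Measurable (ind k) := fun k => hgmeas.comp (hmeas k)
  have hindint : Integrable (ind 0) μ := by
    refine (integrable_const (1 : ℝ)).mono' (hindmeas 0).aestronglyMeasurable ?_
    filter_upwards with ω
    simp only [hind_def]
    split_ifs <;> simp
  set p : ℝ := μ[ind 0] with hp_def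
  have hA : MeasurableSet {ω | δ < η 0 ω} :=
    measurableSet_lt measurable_const (hmeas 0).snd
  have hp_eq : p = (μ {ω | δ < η 0 ω}).toReal := by
    have : ind 0 = Set.indicator {ω | δ < η 0 ω} (fun _ => (1 : ℝ)) := by
      funext ω
      simp [hind_def, Set.indicator_apply, Set.mem_setOf_eq]
    rw [hp_def, this, integral_indicator_const (1 : ℝ) hA]
    simp [Measure.real]
  have hppos : 0 < p := by
    rw [hp_eq]
    exact ENNReal.toReal_pos hδprob.ne' (measure_ne_top μ _)
  have hNlln : ∀ᵐ ω ∂μ,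
      Tendsto (fun n : ℕ => (∑ k ∈ Finset.range n, ind k ω) / n) atTop (nhds p) := by
    have hi : Pairwise (Function.onFun (IndepFun · · μ) ind) := by
      intro i j hij
      exact (hindep.comp (fun _ => fun q : ℝ × ℝ => if δ < q.2 then (1 : ℝ) else 0)
        (fun _ => hgmeas)).indepFun hij
    have hid : ∀ i, IdentDistrib (ind i) (ind 0) μ μ := fun i => (hident i).comp hgmeas
    exact strong_law_ae_real ind hindint hi hid
  -- nonnegativity for all k
  have hnn_all : ∀ᵐ ω ∂μ, ∀ k, 0 ≤ η k ω := by
    rw [ae_all_iff]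
    intro k
    have hidk : IdentDistrib (η 0) (η k) μ μ :=
      ((hident k).comp measurable_snd).symm
    exact hidk.ae_snd (p := fun x : ℝ => 0 ≤ x) measurableSet_Ici hnonneg
  filter_upwards [hSlln, hLlln, hNlln, hnn_all] with ω hS hL hN hpos
  set T : ℕ → ℝ := fun m => ∑ i ∈ Finset.range m, ξ i ω with hT_def
  set D : ℕ → ℝ := fun n => ∑ k ∈ Finset.range n,
    η k ω * Real.exp (T (k + 1)) with hD_def
  have hDnonneg : ∀ n, 0 ≤ D n := fun n =>
    Finset.sum_nonneg fun k _ => mul_nonneg (hpos k) (Real.exp_nonneg _)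
  have hT1 : Tendsto (fun k : ℕ => T (k + 1) / ((k : ℝ) + 1)) atTop (nhds a) := by
    have := hS.comp (tendsto_add_atTop_nat 1)
    refine this.congr fun n => ?_
    simp [Function.comp, T]
  have hB : Tendsto (fun k : ℕ => Real.log (1 + η k ω) / ((k : ℝ) + 1)) atTop (nhds 0) :=
    aux_cesaro hL
  rw [tendsto_order]
  constructor
  · -- lower bound: ∀ b < a, eventually b < log D n / n
    intro b hb
    set c : ℝ := (max b 0 + a) / 2 with hc_def
    have hc0 : 0 < c := by
      have : (0 : ℝ) ≤ max b 0 := le_max_right _ _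
      rw [hc_def]; linarith
    have hbc : max b 0 < c := by
      have h1 : max b 0 < a := max_lt hb ha
      rw [hc_def]; linarith
    have hca : c < a := by
      have h1 : max b 0 < a := max_lt hb ha
      rw [hc_def]; linarith
    set θ : ℝ := (max b 0 / c + 1) / 2 with hθ_def
    have hratio_lt : max b 0 / c < 1 := (div_lt_one hc0).2 hbc
    have hratio_nonneg : 0 ≤ max b 0 / c := div_nonneg (le_max_right _ _) hc0.le
    have hθ0 : 0 < θ := by rw [hθ_def]; linarith
    have hθ1 : θ < 1 := by rw [hθ_def]; linarith
    have hbcθ : b < c * θ := by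
      have h1 : max b 0 / c < θ := by rw [hθ_def]; linarith
      have h2 : max b 0 < c * θ := by
        have := (div_lt_iff₀' hc0).1 h1
        linarith [this]
      exact lt_of_le_of_lt (le_max_left b 0) h2
    set N : ℕ → ℝ := fun n => ∑ k ∈ Finset.range n, ind k ω with hN_def
    have hfloor_top : Tendsto (fun n : ℕ => ⌊θ * (n : ℝ)⌋₊) atTop atTop :=
      tendsto_nat_floor_mul_atTop θ hθ0
    have hfloor_le : ∀ n : ℕ, ⌊θ * (n : ℝ)⌋₊ ≤ n := by
      intro n
      have h1 : θ * (n : ℝ) ≤ (n : ℝ) :=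
        mul_le_of_le_one_left (Nat.cast_nonneg n) hθ1.le
      calc ⌊θ * (n : ℝ)⌋₊ ≤ ⌊(n : ℝ)⌋₊ := Nat.floor_mono h1
        _ = n := Nat.floor_natCast n
    have hNfloor : Tendsto (fun n : ℕ => N ⌊θ * (n : ℝ)⌋₊ / (⌊θ * (n : ℝ)⌋₊ : ℝ))
        atTop (nhds p) := hN.comp hfloor_top
    have hfq : Tendsto (fun n : ℕ => ((⌊θ * (n : ℝ)⌋₊ : ℝ) / (n : ℝ))) atTop (nhds θ) :=
      (tendsto_nat_floor_mul_div_atTop hθ0.le).comp tendsto_natCast_atTop_atTop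
    have hNθ : Tendsto (fun n : ℕ => N ⌊θ * (n : ℝ)⌋₊ / (n : ℝ)) atTop (nhds (p * θ)) := by
      have hmul := hNfloor.mul hfq
      refine hmul.congr' ?_
      filter_upwards [hfloor_top.eventually_ge_atTop 1] with n hn
      have hne : ((⌊θ * (n : ℝ)⌋₊ : ℝ)) ≠ 0 := by
        exact_mod_cast Nat.one_le_iff_ne_zero.1 hn
      rw [div_mul_div_comm, mul_comm (N ⌊θ * (n : ℝ)⌋₊), mul_div_mul_left _ _ hne]
    have hdiff : Tendsto (fun n : ℕ => N n / (n : ℝ) - N ⌊θ * (n : ℝ)⌋₊ / (n : ℝ))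
        atTop (nhds (p - p * θ)) := hN.sub hNθ
    have hgap : ∀ᶠ n : ℕ in atTop, 0 < N n / (n : ℝ) - N ⌊θ * (n : ℝ)⌋₊ / (n : ℝ) :=
      hdiff.eventually (eventually_gt_nhds (by nlinarith))
    -- T m ≥ c m eventually
    have hTc : ∀ᶠ m : ℕ in atTop, c < T m / m := hS.eventually (eventually_gt_nhds hca)
    obtain ⟨M, hM⟩ := eventually_atTop.1 hTc
    have hfloorM : ∀ᶠ n : ℕ in atTop, max M 1 ≤ ⌊θ * (n : ℝ)⌋₊ :=
      hfloor_top.eventually_ge_atTop (max M 1)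
    have hlogδ : ∀ᶠ n : ℕ in atTop, b - c * θ < Real.log δ / (n : ℝ) :=
      (tendsto_const_div_atTop_nhds_zero_nat (Real.log δ)).eventually
        (eventually_gt_nhds (by linarith))
    filter_upwards [hgap, hfloorM, hlogδ, eventually_ge_atTop 1] with n hgapn hMn hlogδn hn1
    have hnpos : (0 : ℝ) < (n : ℝ) := by exact_mod_cast hn1
    -- find k in the window
    have hNlt : N ⌊θ * (n : ℝ)⌋₊ < N n := by
      have := sub_pos.1 hgapn
      exact (div_lt_div_iff_of_pos_right hnpos).1 this
    obtain ⟨k, hk1, hk2, hk3⟩ := aux_window (hfloor_le n) hNlt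
    have hηk : δ < η k ω := by
      by_contra hcon
      exact hk3 (by simp [hN_def, hind_def, hcon])
    -- D n ≥ δ * exp (T (k+1))
    have hterm : δ * Real.exp (T (k + 1)) ≤ D n := by
      have h1 : δ * Real.exp (T (k + 1)) ≤ η k ω * Real.exp (T (k + 1)) :=
        mul_le_mul_of_nonneg_right hηk.le (Real.exp_nonneg _)
      refine le_trans h1 ?_
      exact Finset.single_le_sum (f := fun j => η j ω * Real.exp (T (j + 1)))
        (fun j _ => mul_nonneg (hpos j) (Real.exp_nonneg _)) (Finset.mem_range.2 hk2)
    have htermpos : 0 < δ * Real.exp (T (k + 1)) := mul_pos hδpos (Real.exp_pos _)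
    have hlogD : Real.log δ + T (k + 1) ≤ Real.log (D n) := by
      have := Real.log_le_log htermpos hterm
      rwa [Real.log_mul hδpos.ne' (Real.exp_ne_zero _), Real.log_exp] at this
    -- T (k+1) ≥ c * (k+1) ≥ c * θ * n
    have hkM : M ≤ k + 1 := le_trans (le_trans (le_max_left M 1) hMn) (by omega)
    have hk1pos : (0 : ℝ) < ((k : ℝ) + 1) := by positivity
    have hTk : c * ((k : ℝ) + 1) < T (k + 1) := by
      have := hM (k + 1) hkM
      have h2 : c * ((k : ℝ) + 1) < (T (k + 1) / ((k : ℝ) + 1)) * ((k : ℝ) + 1) := by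
        apply mul_lt_mul_of_pos_right _ hk1pos
        exact_mod_cast this
      rwa [div_mul_cancel₀ _ hk1pos.ne'] at h2
    have hkθ : θ * (n : ℝ) ≤ (k : ℝ) + 1 := by
      have h1 : θ * (n : ℝ) < (⌊θ * (n : ℝ)⌋₊ : ℝ) + 1 := Nat.lt_floor_add_one _
      have h2 : ((⌊θ * (n : ℝ)⌋₊ : ℝ)) ≤ (k : ℝ) := by exact_mod_cast hk1
      linarith
    have hTθn : c * θ * (n : ℝ) ≤ T (k + 1) := by
      have := mul_le_mul_of_nonneg_left hkθ hc0.le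
      calc c * θ * (n : ℝ) = c * (θ * (n : ℝ)) := by ring
        _ ≤ c * ((k : ℝ) + 1) := this
        _ ≤ T (k + 1) := hTk.le
    -- conclude
    have hfinal : Real.log δ + c * θ * (n : ℝ) ≤ Real.log (D n) := by linarith
    have : Real.log δ / (n : ℝ) + c * θ ≤ Real.log (D n) / (n : ℝ) := by
      have := div_le_div_of_nonneg_right hfinal hnpos.le
      rw [add_div] at this
      rwa [mul_div_assoc, div_self hnpos.ne', mul_one] at this
    calc b = (b - c * θ) + c * θ := by ring
      _ < Real.log δ / (n : ℝ) + c * θ := by linarith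
      _ ≤ Real.log (D n) / (n : ℝ) := this
  · -- upper bound: ∀ b > a, eventually log D n / n < b
    intro b hb
    set ε : ℝ := (b - a) / 2 with hε_def
    have hε : 0 < ε := by rw [hε_def]; linarith
    have hev1 : ∀ᶠ k : ℕ in atTop, Real.log (1 + η k ω) / ((k : ℝ) + 1) < ε / 2 :=
      hB.eventually (eventually_lt_nhds (by linarith))
    have hev2 : ∀ᶠ k : ℕ in atTop, T (k + 1) / ((k : ℝ) + 1) < a + ε / 2 :=
      hT1.eventually (eventually_lt_nhds (by linarith))
    obtain ⟨K, hK⟩ := eventually_atTop.1 (hev1.and hev2)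
    have haε : 0 < a + ε := by linarith
    have hbound : ∀ k, K ≤ k → Real.log (1 + η k ω) + T (k + 1) ≤ (a + ε) * ((k : ℝ) + 1) := by
      intro k hk
      obtain ⟨h1, h2⟩ := hK k hk
      have hk1 : (0 : ℝ) < (k : ℝ) + 1 := by positivity
      have h1' : Real.log (1 + η k ω) < (ε / 2) * ((k : ℝ) + 1) := (div_lt_iff₀ hk1).1 h1
      have h2' : T (k + 1) < (a + ε / 2) * ((k : ℝ) + 1) := (div_lt_iff₀ hk1).1 h2
      nlinarith [hk1.le]
    set C0 : ℝ := ∑ k ∈ Finset.range K, η k ω * Real.exp (T (k + 1)) with hC0_def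
    have hC0nn : 0 ≤ C0 :=
      Finset.sum_nonneg fun k _ => mul_nonneg (hpos k) (Real.exp_nonneg _)
    -- D n ≤ (C0 + n) * exp ((a+ε) n) for n ≥ K
    have hDle : ∀ n, K ≤ n → D n ≤ (C0 + (n : ℝ)) * Real.exp ((a + ε) * n) := by
      intro n hn
      have hsplit : D n = C0 + ∑ k ∈ Finset.Ico K n, η k ω * Real.exp (T (k + 1)) := by
        exact (Finset.sum_range_add_sum_Ico (fun k => η k ω * Real.exp (T (k + 1))) hn).symm
      have htail : ∑ k ∈ Finset.Ico K n, η k ω * Real.exp (T (k + 1))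
          ≤ (n : ℝ) * Real.exp ((a + ε) * n) := by
        have hle : ∀ k ∈ Finset.Ico K n,
            η k ω * Real.exp (T (k + 1)) ≤ Real.exp ((a + ε) * n) := by
          intro k hk
          rcases Finset.mem_Ico.1 hk with ⟨hk1, hk2⟩
          have hpos1 : (0 : ℝ) < 1 + η k ω := by linarith [hpos k]
          have step1 : η k ω * Real.exp (T (k + 1))
              ≤ (1 + η k ω) * Real.exp (T (k + 1)) :=
            mul_le_mul_of_nonneg_right (by linarith) (Real.exp_nonneg _)
          have step2 : (1 + η k ω) * Real.exp (T (k + 1))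
              = Real.exp (Real.log (1 + η k ω) + T (k + 1)) := by
            rw [Real.exp_add, Real.exp_log hpos1]
          have step3 : Real.log (1 + η k ω) + T (k + 1) ≤ (a + ε) * ((k : ℝ) + 1) :=
            hbound k hk1
          have step4 : (a + ε) * ((k : ℝ) + 1) ≤ (a + ε) * n := by
            apply mul_le_mul_of_nonneg_left _ haε.le
            have : (k : ℝ) + 1 ≤ (n : ℝ) := by exact_mod_cast hk2
            linarith
          calc η k ω * Real.exp (T (k + 1))
              ≤ Real.exp (Real.log (1 + η k ω) + T (k + 1)) := by rw [← step2]; exact step1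
            _ ≤ Real.exp ((a + ε) * n) := Real.exp_le_exp.2 (le_trans step3 step4)
        calc ∑ k ∈ Finset.Ico K n, η k ω * Real.exp (T (k + 1))
            ≤ ∑ _k ∈ Finset.Ico K n, Real.exp ((a + ε) * n) := Finset.sum_le_sum hle
          _ = ((Finset.Ico K n).card : ℝ) * Real.exp ((a + ε) * n) := by
              rw [Finset.sum_const, nsmul_eq_mul]
          _ ≤ (n : ℝ) * Real.exp ((a + ε) * n) := by
              apply mul_le_mul_of_nonneg_right _ (Real.exp_nonneg _)
              rw [Nat.card_Ico]
              exact_mod_cast Nat.sub_le n K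
      have hexp1 : (1 : ℝ) ≤ Real.exp ((a + ε) * n) :=
        Real.one_le_exp (by positivity)
      calc D n = C0 + ∑ k ∈ Finset.Ico K n, η k ω * Real.exp (T (k + 1)) := hsplit
        _ ≤ C0 + (n : ℝ) * Real.exp ((a + ε) * n) := by linarith
        _ ≤ (C0 + (n : ℝ)) * Real.exp ((a + ε) * n) := by nlinarith
    -- log (C0 + n) / n → 0
    have hlogn : Tendsto (fun n : ℕ => Real.log (C0 + (n : ℝ)) / (n : ℝ)) atTop (nhds 0) := by
      have hx : Tendsto (fun n : ℕ => C0 + (n : ℝ)) atTop atTop :=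
        tendsto_atTop_add_const_left _ C0 tendsto_natCast_atTop_atTop
      have h1 : Tendsto (fun x : ℝ => Real.log x / x) atTop (nhds 0) := by
        have := Real.tendsto_pow_log_div_mul_add_atTop 1 0 1 one_ne_zero
        simpa using this
      have h1' : Tendsto (fun n : ℕ => Real.log (C0 + (n : ℝ)) / (C0 + (n : ℝ)))
          atTop (nhds 0) := h1.comp hx
      have h2 : Tendsto (fun n : ℕ => (C0 + (n : ℝ)) / (n : ℝ)) atTop (nhds 1) := by
        have hc := tendsto_const_div_atTop_nhds_zero_nat C0
        have := hc.add tendsto_const_nhds (b := (1 : ℝ))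
        rw [zero_add] at this
        refine this.congr' ?_
        filter_upwards [eventually_ge_atTop 1] with n hn
        have hnpos : (0 : ℝ) < (n : ℝ) := by exact_mod_cast hn
        field_simp
      have hmul := h1'.mul h2
      rw [zero_mul] at hmul
      refine hmul.congr' ?_
      filter_upwards [eventually_ge_atTop 1] with n hn
      have hnpos : (0 : ℝ) < (n : ℝ) := by exact_mod_cast hn
      have hC0n : (C0 + (n : ℝ)) ≠ 0 := by positivity
      rw [div_mul_div_comm, mul_comm (Real.log (C0 + (n : ℝ))), mul_div_mul_left _ _ hC0n]
    have hlogev : ∀ᶠ n : ℕ in atTop, Real.log (C0 + (n : ℝ)) / (n : ℝ) < ε :=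
      hlogn.eventually (eventually_lt_nhds hε)
    filter_upwards [hlogev, eventually_ge_atTop (max K 1)] with n hlogn' hn
    have hnK : K ≤ n := le_trans (le_max_left _ _) hn
    have hn1 : 1 ≤ n := le_trans (le_max_right _ _) hn
    have hnpos : (0 : ℝ) < (n : ℝ) := by exact_mod_cast hn1
    have hy1 : (1 : ℝ) ≤ (C0 + (n : ℝ)) * Real.exp ((a + ε) * n) := by
      have h1 : (1 : ℝ) ≤ C0 + (n : ℝ) := by
        have : (1 : ℝ) ≤ (n : ℝ) := by exact_mod_cast hn1
        linarith
      have h2 : (1 : ℝ) ≤ Real.exp ((a + ε) * n) := Real.one_le_exp (by positivity)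
      nlinarith
    have hlogDle : Real.log (D n) ≤ Real.log (C0 + (n : ℝ)) + (a + ε) * n := by
      have hylog : Real.log ((C0 + (n : ℝ)) * Real.exp ((a + ε) * n))
          = Real.log (C0 + (n : ℝ)) + (a + ε) * n := by
        rw [Real.log_mul (by positivity) (Real.exp_ne_zero _), Real.log_exp]
      rcases eq_or_lt_of_le (hDnonneg n) with h0 | h0
      · rw [← h0, Real.log_zero]
        rw [← hylog]
        exact Real.log_nonneg hy1
      · rw [← hylog]
        exact Real.log_le_log h0 (hDle n hnK)
    have : Real.log (D n) / (n : ℝ) ≤ Real.log (C0 + (n : ℝ)) / (n : ℝ) + (a + ε) := by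
      have hdiv := div_le_div_of_nonneg_right hlogDle hnpos.le
      rwa [add_div, mul_div_assoc, div_self hnpos.ne', mul_one] at hdiv
    calc Real.log (D n) / (n : ℝ)
        ≤ Real.log (C0 + (n : ℝ)) / (n : ℝ) + (a + ε) := this
      _ < ε + (a + ε) := by linarith
      _ = b := by rw [hε_def]; ring
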